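/- The operators ∂_i^{(β)} satisfy the braid relations: ∂_i^{(β)} ∂_{i+1}^{(β)} ∂_i^{(β)} = ∂_{i+1}^{(β)} ∂_i^{(β)} ∂_{i+1}^{(β)}, and ∂_i^{(β)} ∂_j^{(β)} = ∂_j^{(β)} ∂_i^{(β)} when |i - j| ≥ 2. -/

import Mathlib

open MvPolynomial

noncomputable section

abbrev R : Type := MvPolynomial ℕ (Polynomial ℤ)

/-- The parameter `β`, as an element of `R = ℤ[β][x₀,x₁,…]`. -/
def bb : R := MvPolynomial.C Polynomial.X

/-- `sw i` exchanges the variables `x_i` and `x_{i+1}`. -/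
def sw (i : ℕ) (f : R) : R := MvPolynomial.rename (Equiv.swap i (i + 1)) f

/-- The β-deformed divided difference operator, `∂_i^{(β)}(f) = ∂_i((1 + β x_{i+1})·f)`. -/
def Db (D : ℕ → R → R) (i : ℕ) (f : R) : R := D i ((1 + bb * X (i + 1)) * f)

set_option maxHeartbeats 1000000 in
/-- The operators `∂_i^{(β)}` satisfy the braid relations:
`∂_i^{(β)} ∂_{i+1}^{(β)} ∂_i^{(β)} = ∂_{i+1}^{(β)} ∂_i^{(β)} ∂_{i+1}^{(β)}`, and
`∂_i^{(β)} ∂_j^{(β)} = ∂_j^{(β)} ∂_i^{(β)}` when `|i - j| ≥ 2`.  Here each `∂_i`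
is characterized by `(x_i - x_{i+1}) · ∂_i f = f - s_i f`. -/
theorem stmt5 (D : ℕ → R → R)
    (hD : ∀ (i : ℕ) (f : R), (X i - X (i + 1)) * D i f = f - sw i f) :
    (∀ (i : ℕ) (f : R),
        Db D i (Db D (i + 1) (Db D i f)) = Db D (i + 1) (Db D i (Db D (i + 1) f))) ∧
    (∀ (i j : ℕ) (f : R), i + 2 ≤ j ∨ j + 2 ≤ i →
        Db D i (Db D j f) = Db D j (Db D i f)) := by
  have hXne : ∀ m n : ℕ, m ≠ n → (X m - X n : R) ≠ 0 := by
    intro m n h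
    exact sub_ne_zero.mpr fun he => h (MvPolynomial.X_injective he)
  constructor
  · intro i f
    have rfl2 : i + 1 + 1 = i + 2 := rfl
    have w1 : Equiv.swap i (i+1) (i+2) = i+2 :=
      Equiv.swap_apply_of_ne_of_ne (by omega) (by omega)
    have w2 : Equiv.swap (i+1) (i+2) i = i :=
      Equiv.swap_apply_of_ne_of_ne (by omega) (by omega)
    have hss : ⇑(Equiv.swap i (i+1)) ∘ ⇑(Equiv.swap i (i+1)) = id := by
      funext n; simp [Equiv.swap_apply_self]
    have htt : ⇑(Equiv.swap (i+1) (i+2)) ∘ ⇑(Equiv.swap (i+1) (i+2)) = id := by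
      funext n; simp [Equiv.swap_apply_self]
    have hbr : ⇑(Equiv.swap i (i+1)) ∘ ⇑(Equiv.swap (i+1) (i+2)) ∘ ⇑(Equiv.swap i (i+1))
        = ⇑(Equiv.swap (i+1) (i+2)) ∘ ⇑(Equiv.swap i (i+1)) ∘ ⇑(Equiv.swap (i+1) (i+2)) := by
      funext n
      simp only [Function.comp_apply, Equiv.swap_apply_def]
      split_ifs <;> omega
    simp only [Db, rfl2]
    set u := D i ((1 + bb * X (i+1)) * f) with hu
    set u' := D (i+1) ((1 + bb * X (i+2)) * f) with hu'
    set v := D (i+1) ((1 + bb * X (i+2)) * u) with hv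
    set v' := D i ((1 + bb * X (i+1)) * u') with hv'
    -- relations
    have h_u : (X i - X (i+1)) * u = (1 + bb * X (i+1)) * f - (1 + bb * X i) * sw i f := by
      have h := hD i ((1 + bb * X (i+1)) * f)
      rw [← hu] at h
      simp only [sw, bb, map_mul, map_sub, map_add, map_one, rename_rename, rename_X, rename_C,
        rename_id, Function.comp_apply, Equiv.swap_apply_left, Equiv.swap_apply_right,
        rfl2, w1, w2, hss, htt, hbr, id_eq] at h ⊢
      linear_combination h
    have h_su : (X i - X (i+1)) * sw i u
        = (1 + bb * X (i+1)) * f - (1 + bb * X i) * sw i f := by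
      have h := congrArg (sw i) (hD i ((1 + bb * X (i+1)) * f))
      rw [← hu] at h
      simp only [sw, bb, map_mul, map_sub, map_add, map_one, rename_rename, rename_X, rename_C,
        rename_id, Function.comp_apply, Equiv.swap_apply_left, Equiv.swap_apply_right,
        rfl2, w1, w2, hss, htt, hbr, id_eq, AlgHom.id_apply] at h ⊢
      linear_combination -h
    have h_tu : (X i - X (i+2)) * sw (i+1) u
        = (1 + bb * X (i+2)) * sw (i+1) f - (1 + bb * X i) * sw (i+1) (sw i f) := by
      have h := congrArg (sw (i+1)) (hD i ((1 + bb * X (i+1)) * f))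
      rw [← hu] at h
      simp only [sw, bb, map_mul, map_sub, map_add, map_one, rename_rename, rename_X, rename_C,
        rename_id, Function.comp_apply, Equiv.swap_apply_left, Equiv.swap_apply_right,
        rfl2, w1, w2, hss, htt, hbr, id_eq] at h ⊢
      linear_combination h
    have h_stu : (X (i+1) - X (i+2)) * sw i (sw (i+1) u)
        = (1 + bb * X (i+2)) * sw i (sw (i+1) f)
          - (1 + bb * X (i+1)) * sw i (sw (i+1) (sw i f)) := by
      have h := congrArg (sw i) (congrArg (sw (i+1)) (hD i ((1 + bb * X (i+1)) * f)))
      rw [← hu] at h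
      simp only [sw, bb, map_mul, map_sub, map_add, map_one, rename_rename, rename_X, rename_C,
        rename_id, Function.comp_apply, Equiv.swap_apply_left, Equiv.swap_apply_right,
        rfl2, w1, w2, hss, htt, hbr, id_eq] at h ⊢
      linear_combination h
    have h_v : (X (i+1) - X (i+2)) * v
        = (1 + bb * X (i+2)) * u - (1 + bb * X (i+1)) * sw (i+1) u := by
      have h := hD (i+1) ((1 + bb * X (i+2)) * u)
      rw [← hv] at h
      simp only [sw, bb, map_mul, map_sub, map_add, map_one, rename_rename, rename_X, rename_C,
        rename_id, Function.comp_apply, Equiv.swap_apply_left, Equiv.swap_apply_right,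
        rfl2, w1, w2, hss, htt, hbr, id_eq] at h ⊢
      linear_combination h
    have h_sv : (X i - X (i+2)) * sw i v
        = (1 + bb * X (i+2)) * sw i u - (1 + bb * X i) * sw i (sw (i+1) u) := by
      have h := congrArg (sw i) (hD (i+1) ((1 + bb * X (i+2)) * u))
      rw [← hv] at h
      simp only [sw, bb, map_mul, map_sub, map_add, map_one, rename_rename, rename_X, rename_C,
        rename_id, Function.comp_apply, Equiv.swap_apply_left, Equiv.swap_apply_right,
        rfl2, w1, w2, hss, htt, hbr, id_eq] at h ⊢
      linear_combination h
    have h_L : (X i - X (i+1)) * D i ((1 + bb * X (i+1)) * v)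
        = (1 + bb * X (i+1)) * v - (1 + bb * X i) * sw i v := by
      have h := hD i ((1 + bb * X (i+1)) * v)
      simp only [sw, bb, map_mul, map_sub, map_add, map_one, rename_rename, rename_X, rename_C,
        rename_id, Function.comp_apply, Equiv.swap_apply_left, Equiv.swap_apply_right,
        rfl2, w1, w2, hss, htt, hbr, id_eq] at h ⊢
      linear_combination h
    have h_up : (X (i+1) - X (i+2)) * u'
        = (1 + bb * X (i+2)) * f - (1 + bb * X (i+1)) * sw (i+1) f := by
      have h := hD (i+1) ((1 + bb * X (i+2)) * f)
      rw [← hu'] at h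
      simp only [sw, bb, map_mul, map_sub, map_add, map_one, rename_rename, rename_X, rename_C,
        rename_id, Function.comp_apply, Equiv.swap_apply_left, Equiv.swap_apply_right,
        rfl2, w1, w2, hss, htt, hbr, id_eq] at h ⊢
      linear_combination h
    have h_tup : (X (i+1) - X (i+2)) * sw (i+1) u'
        = (1 + bb * X (i+2)) * f - (1 + bb * X (i+1)) * sw (i+1) f := by
      have h := congrArg (sw (i+1)) (hD (i+1) ((1 + bb * X (i+2)) * f))
      rw [← hu'] at h
      simp only [sw, bb, map_mul, map_sub, map_add, map_one, rename_rename, rename_X, rename_C,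
        rename_id, Function.comp_apply, Equiv.swap_apply_left, Equiv.swap_apply_right,
        rfl2, w1, w2, hss, htt, hbr, id_eq, AlgHom.id_apply] at h ⊢
      linear_combination -h
    have h_sup : (X i - X (i+2)) * sw i u'
        = (1 + bb * X (i+2)) * sw i f - (1 + bb * X i) * sw i (sw (i+1) f) := by
      have h := congrArg (sw i) (hD (i+1) ((1 + bb * X (i+2)) * f))
      rw [← hu'] at h
      simp only [sw, bb, map_mul, map_sub, map_add, map_one, rename_rename, rename_X, rename_C,
        rename_id, Function.comp_apply, Equiv.swap_apply_left, Equiv.swap_apply_right,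
        rfl2, w1, w2, hss, htt, hbr, id_eq] at h ⊢
      linear_combination h
    have h_tsup : (X i - X (i+1)) * sw (i+1) (sw i u')
        = (1 + bb * X (i+1)) * sw (i+1) (sw i f)
          - (1 + bb * X i) * sw i (sw (i+1) (sw i f)) := by
      have h := congrArg (sw (i+1)) (congrArg (sw i) (hD (i+1) ((1 + bb * X (i+2)) * f)))
      rw [← hu'] at h
      simp only [sw, bb, map_mul, map_sub, map_add, map_one, rename_rename, rename_X, rename_C,
        rename_id, Function.comp_apply, Equiv.swap_apply_left, Equiv.swap_apply_right,
        rfl2, w1, w2, hss, htt, hbr, id_eq] at h ⊢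
      linear_combination h
    have h_vp : (X i - X (i+1)) * v'
        = (1 + bb * X (i+1)) * u' - (1 + bb * X i) * sw i u' := by
      have h := hD i ((1 + bb * X (i+1)) * u')
      rw [← hv'] at h
      simp only [sw, bb, map_mul, map_sub, map_add, map_one, rename_rename, rename_X, rename_C,
        rename_id, Function.comp_apply, Equiv.swap_apply_left, Equiv.swap_apply_right,
        rfl2, w1, w2, hss, htt, hbr, id_eq] at h ⊢
      linear_combination h
    have h_tvp : (X i - X (i+2)) * sw (i+1) v'
        = (1 + bb * X (i+2)) * sw (i+1) u' - (1 + bb * X i) * sw (i+1) (sw i u') := by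
      have h := congrArg (sw (i+1)) (hD i ((1 + bb * X (i+1)) * u'))
      rw [← hv'] at h
      simp only [sw, bb, map_mul, map_sub, map_add, map_one, rename_rename, rename_X, rename_C,
        rename_id, Function.comp_apply, Equiv.swap_apply_left, Equiv.swap_apply_right,
        rfl2, w1, w2, hss, htt, hbr, id_eq] at h ⊢
      linear_combination h
    have h_R : (X (i+1) - X (i+2)) * D (i+1) ((1 + bb * X (i+2)) * v')
        = (1 + bb * X (i+2)) * v' - (1 + bb * X (i+1)) * sw (i+1) v' := by
      have h := hD (i+1) ((1 + bb * X (i+2)) * v')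
      simp only [sw, bb, map_mul, map_sub, map_add, map_one, rename_rename, rename_X, rename_C,
        rename_id, Function.comp_apply, Equiv.swap_apply_left, Equiv.swap_apply_right,
        rfl2, w1, w2, hss, htt, hbr, id_eq] at h ⊢
      linear_combination h
    have hZ : (((X i - X (i+1)) * ((X i - X (i+2)) * (X (i+1) - X (i+2)))) ^ 2 : R) ≠ 0 :=
      pow_ne_zero _ (mul_ne_zero (hXne _ _ (by omega))
        (mul_ne_zero (hXne _ _ (by omega)) (hXne _ _ (by omega))))
    refine mul_left_cancel₀ hZ ?_
    linear_combination
      ((X i - X (i+1)) * (X i - X (i+2))^2 * (X (i+1) - X (i+2))^2) * h_L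
      + ((1 + bb * X (i+1)) * (X i - X (i+1)) * (X i - X (i+2))^2 * (X (i+1) - X (i+2))) * h_v
      - ((1 + bb * X i) * (X i - X (i+1)) * (X i - X (i+2)) * (X (i+1) - X (i+2))^2) * h_sv
      + ((1 + bb * X (i+1)) * (1 + bb * X (i+2)) * (X i - X (i+2))^2 * (X (i+1) - X (i+2))) * h_u
      - ((1 + bb * X i) * (1 + bb * X (i+2)) * (X i - X (i+2)) * (X (i+1) - X (i+2))^2) * h_su
      - ((1 + bb * X (i+1))^2 * (X i - X (i+1)) * (X i - X (i+2)) * (X (i+1) - X (i+2))) * h_tu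
      + ((1 + bb * X i)^2 * (X i - X (i+1)) * (X i - X (i+2)) * (X (i+1) - X (i+2))) * h_stu
      - ((X i - X (i+1))^2 * (X i - X (i+2))^2 * (X (i+1) - X (i+2))) * h_R
      - ((1 + bb * X (i+2)) * (X i - X (i+1)) * (X i - X (i+2))^2 * (X (i+1) - X (i+2))) * h_vp
      + ((1 + bb * X (i+1)) * (X i - X (i+1))^2 * (X i - X (i+2)) * (X (i+1) - X (i+2))) * h_tvp
      - ((1 + bb * X (i+1)) * (1 + bb * X (i+2)) * (X i - X (i+1)) * (X i - X (i+2))^2) * h_up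
      + ((1 + bb * X (i+1)) * (1 + bb * X (i+2)) * (X i - X (i+1))^2 * (X i - X (i+2))) * h_tup
      + ((1 + bb * X i) * (1 + bb * X (i+2)) * (X i - X (i+1)) * (X i - X (i+2)) * (X (i+1) - X (i+2))) * h_sup
      - ((1 + bb * X i) * (1 + bb * X (i+1)) * (X i - X (i+1)) * (X i - X (i+2)) * (X (i+1) - X (i+2))) * h_tsup
  · have key : ∀ i j : ℕ, ∀ f : R, i + 2 ≤ j →
        Db D i (Db D j f) = Db D j (Db D i f) := by
      intro i j f hij
      have wj1 : Equiv.swap j (j+1) i = i :=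
        Equiv.swap_apply_of_ne_of_ne (by omega) (by omega)
      have wj2 : Equiv.swap j (j+1) (i+1) = i+1 :=
        Equiv.swap_apply_of_ne_of_ne (by omega) (by omega)
      have wi1 : Equiv.swap i (i+1) j = j :=
        Equiv.swap_apply_of_ne_of_ne (by omega) (by omega)
      have wi2 : Equiv.swap i (i+1) (j+1) = j+1 :=
        Equiv.swap_apply_of_ne_of_ne (by omega) (by omega)
      have hcomm : ⇑(Equiv.swap i (i+1)) ∘ ⇑(Equiv.swap j (j+1))
          = ⇑(Equiv.swap j (j+1)) ∘ ⇑(Equiv.swap i (i+1)) := by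
        funext n
        simp only [Function.comp_apply, Equiv.swap_apply_def]
        split_ifs <;> omega
      simp only [Db]
      set u := D j ((1 + bb * X (j+1)) * f) with hu
      set u2 := D i ((1 + bb * X (i+1)) * f) with hu2
      have h_u : (X j - X (j+1)) * u
          = (1 + bb * X (j+1)) * f - (1 + bb * X j) * sw j f := by
        have h := hD j ((1 + bb * X (j+1)) * f)
        rw [← hu] at h
        simp only [sw, bb, map_mul, map_sub, map_add, map_one, rename_rename, rename_X,
          rename_C, rename_id, Function.comp_apply, Equiv.swap_apply_left,
          Equiv.swap_apply_right, wj1, wj2, wi1, wi2, hcomm, id_eq] at h ⊢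
        linear_combination h
      have h_su : (X j - X (j+1)) * sw i u
          = (1 + bb * X (j+1)) * sw i f - (1 + bb * X j) * sw j (sw i f) := by
        have h := congrArg (sw i) (hD j ((1 + bb * X (j+1)) * f))
        rw [← hu] at h
        simp only [sw, bb, map_mul, map_sub, map_add, map_one, rename_rename, rename_X,
          rename_C, rename_id, Function.comp_apply, Equiv.swap_apply_left,
          Equiv.swap_apply_right, wj1, wj2, wi1, wi2, hcomm, id_eq] at h ⊢
        linear_combination h
      have h_L : (X i - X (i+1)) * D i ((1 + bb * X (i+1)) * u)
          = (1 + bb * X (i+1)) * u - (1 + bb * X i) * sw i u := by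
        have h := hD i ((1 + bb * X (i+1)) * u)
        simp only [sw, bb, map_mul, map_sub, map_add, map_one, rename_rename, rename_X,
          rename_C, rename_id, Function.comp_apply, Equiv.swap_apply_left,
          Equiv.swap_apply_right, wj1, wj2, wi1, wi2, hcomm, id_eq] at h ⊢
        linear_combination h
      have h_u2 : (X i - X (i+1)) * u2
          = (1 + bb * X (i+1)) * f - (1 + bb * X i) * sw i f := by
        have h := hD i ((1 + bb * X (i+1)) * f)
        rw [← hu2] at h
        simp only [sw, bb, map_mul, map_sub, map_add, map_one, rename_rename, rename_X,
          rename_C, rename_id, Function.comp_apply, Equiv.swap_apply_left,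
          Equiv.swap_apply_right, wj1, wj2, wi1, wi2, hcomm, id_eq] at h ⊢
        linear_combination h
      have h_tu2 : (X i - X (i+1)) * sw j u2
          = (1 + bb * X (i+1)) * sw j f - (1 + bb * X i) * sw j (sw i f) := by
        have h := congrArg (sw j) (hD i ((1 + bb * X (i+1)) * f))
        rw [← hu2] at h
        simp only [sw, bb, map_mul, map_sub, map_add, map_one, rename_rename, rename_X,
          rename_C, rename_id, Function.comp_apply, Equiv.swap_apply_left,
          Equiv.swap_apply_right, wj1, wj2, wi1, wi2, hcomm, id_eq] at h ⊢
        linear_combination h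
      have h_R : (X j - X (j+1)) * D j ((1 + bb * X (j+1)) * u2)
          = (1 + bb * X (j+1)) * u2 - (1 + bb * X j) * sw j u2 := by
        have h := hD j ((1 + bb * X (j+1)) * u2)
        simp only [sw, bb, map_mul, map_sub, map_add, map_one, rename_rename, rename_X,
          rename_C, rename_id, Function.comp_apply, Equiv.swap_apply_left,
          Equiv.swap_apply_right, wj1, wj2, wi1, wi2, hcomm, id_eq] at h ⊢
        linear_combination h
      have hZ : ((X i - X (i+1)) * (X j - X (j+1)) : R) ≠ 0 :=
        mul_ne_zero (hXne _ _ (by omega)) (hXne _ _ (by omega))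
      refine mul_left_cancel₀ hZ ?_
      linear_combination (X j - X (j+1)) * h_L + (1 + bb * X (i+1)) * h_u
        - (1 + bb * X i) * h_su - (X i - X (i+1)) * h_R
        - (1 + bb * X (j+1)) * h_u2 + (1 + bb * X j) * h_tu2
    intro i j f h
    rcases h with h | h
    · exact key i j f h
    · exact (key j i f h).symm

end
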